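/- Information distortion (Lemma 2): Let Y, X, T be finite nonempty types and let p be a strictly positive joint probability mass function on X × Y × T such that Y → X → T forms a Markov chain. Then the expected Kullback–Leibler divergence between the conditional distributions P(Y|X) and P(Y|T), namely ∑_{x,t} p_{X,T}(x,t) · ∑_y (p_{X,Y}(x,y)/p_X(x)) · log( (p_{X,Y}(x,y)/p_X(x)) / (p_{Y,T}(y,t)/p_T(t)) ), equals the conditional mutual information I(X;Y|T). -/

import Mathlib

open scoped BigOperators

noncomputable section

namespace AdvLatent

variable {A B C : Type*} [Fintype A] [Fintype B] [Fintype C]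

/-- Marginal of a joint pmf on the first two coordinates. -/
def m12 (p : A → B → C → ℝ) (a : A) (b : B) : ℝ := ∑ c, p a b c

/-- Marginal of a joint pmf on the first and third coordinates. -/
def m13 (p : A → B → C → ℝ) (a : A) (c : C) : ℝ := ∑ b, p a b c

/-- Marginal of a joint pmf on the last two coordinates. -/
def m23 (p : A → B → C → ℝ) (b : B) (c : C) : ℝ := ∑ a, p a b c

/-- Marginal of a joint pmf on the first coordinate. -/
def m1 (p : A → B → C → ℝ) (a : A) : ℝ := ∑ b, ∑ c, p a b c

/-- Marginal of a joint pmf on the second coordinate. -/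
def m2 (p : A → B → C → ℝ) (b : B) : ℝ := ∑ a, ∑ c, p a b c

/-- Marginal of a joint pmf on the third coordinate. -/
def m3 (p : A → B → C → ℝ) (c : C) : ℝ := ∑ a, ∑ b, p a b c

/-- Mutual information between the first and second coordinates:
`I(1;2) = ∑ p₁₂(a,b) log (p₁₂(a,b) / (p₁(a) p₂(b)))`. -/
def mi12 (p : A → B → C → ℝ) : ℝ :=
  ∑ a, ∑ b, m12 p a b * Real.log (m12 p a b / (m1 p a * m2 p b))

/-- Mutual information between the first and third coordinates. -/
def mi13 (p : A → B → C → ℝ) : ℝ :=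
  ∑ a, ∑ c, m13 p a c * Real.log (m13 p a c / (m1 p a * m3 p c))

/-- Mutual information between the second and third coordinates. -/
def mi23 (p : A → B → C → ℝ) : ℝ :=
  ∑ b, ∑ c, m23 p b c * Real.log (m23 p b c / (m2 p b * m3 p c))

/-- Conditional mutual information between the first and second coordinates
given the third: `I(1;2|3) = ∑ p(a,b,c) log (p₃(c) p(a,b,c) / (p₁₃(a,c) p₂₃(b,c)))`. -/
def cmi12g3 (p : A → B → C → ℝ) : ℝ :=
  ∑ a, ∑ b, ∑ c, p a b c *
    Real.log (m3 p c * p a b c / (m13 p a c * m23 p b c))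

/-- Mutual information between the pair (first, third) coordinates, regarded as a
single random variable, and the second coordinate. -/
def miPair13_2 (p : A → B → C → ℝ) : ℝ :=
  ∑ a, ∑ c, ∑ b, p a b c * Real.log (p a b c / (m13 p a c * m2 p b))

end AdvLatent

open AdvLatent

/-- **Information distortion.** For a strictly positive joint pmf `p` on `X × Y × T`
(finite nonempty types) such that `Y → X → T` is a Markov chain, the expected
Kullback–Leibler divergence between the conditional distributions `P(Y|X)` and `P(Y|T)`
equals the conditional mutual information `I(X;Y|T)`. -/
theorem information_distortion
    {X Y T : Type*} [Fintype X] [Fintype Y] [Fintype T]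
    [Nonempty X] [Nonempty Y] [Nonempty T]
    (p : X → Y → T → ℝ)
    (hpos : ∀ x y t, 0 < p x y t)
    (hsum : ∑ x, ∑ y, ∑ t, p x y t = 1)
    (hmarkov : ∀ x y t, p x y t * m1 p x = m12 p x y * m13 p x t) :
    (∑ x, ∑ t, m13 p x t *
        ∑ y, (m12 p x y / m1 p x) *
          Real.log ((m12 p x y / m1 p x) / (m23 p y t / m3 p t)))
      = cmi12g3 p := by
  have h1 : ∀ x, 0 < m1 p x := fun x =>
    Finset.sum_pos (fun y _ => Finset.sum_pos (fun t _ => hpos x y t) Finset.univ_nonempty)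
      Finset.univ_nonempty
  unfold cmi12g3
  refine Finset.sum_congr rfl fun x _ => ?_
  simp_rw [Finset.mul_sum]
  rw [Finset.sum_comm]
  refine Finset.sum_congr rfl fun y _ => Finset.sum_congr rfl fun t _ => ?_
  have h12 : 0 < m12 p x y := Finset.sum_pos (fun t _ => hpos x y t) Finset.univ_nonempty
  have h13 : 0 < m13 p x t := Finset.sum_pos (fun y _ => hpos x y t) Finset.univ_nonempty
  have h23 : 0 < m23 p y t := Finset.sum_pos (fun x _ => hpos x y t) Finset.univ_nonempty
  have h3 : 0 < m3 p t :=
    Finset.sum_pos (fun x _ => Finset.sum_pos (fun y _ => hpos x y t) Finset.univ_nonempty)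
      Finset.univ_nonempty
  have hp : p x y t = m12 p x y * m13 p x t / m1 p x := by
    rw [eq_div_iff (h1 x).ne']
    exact hmarkov x y t
  have harg : (m12 p x y / m1 p x) / (m23 p y t / m3 p t)
      = m3 p t * p x y t / (m13 p x t * m23 p y t) := by
    rw [hp]
    field_simp
  have hcoef : m13 p x t * (m12 p x y / m1 p x) = p x y t := by
    rw [hp]; field_simp
  rw [harg, ← hcoef]; ring
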